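/- Let (M_k)_{k≥1} be invertible real n×n matrices, (Ω_k)_{k≥0} real symmetric positive semi-definite n×n matrices, and P_0 a real symmetric positive semi-definite n×n matrix. Define P_{k+1} = M_{k+1}(I + P_kΩ_k)⁻¹P_kM_{k+1}ᵀ and M_{k:0} = M_k⋯M_1. Then for every k ≥ 0 and every vector h ∈ ℝⁿ, hᵀP_kh ≤ σ₁⁰·‖M_{k:0}ᵀh‖², where σ₁⁰ is the largest eigenvalue of P_0 and ‖·‖ is the Euclidean norm. -/

import Mathlib

open Matrix

/-- `Mres M l j` is the resolvent `M_{(l+j):l} = M_{l+j} ⋯ M_{l+1}`, so that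
`M_{k:0} = Mres M 0 k` and `M_{0:0} = 1`. -/
def Mres {n : ℕ} (M : ℕ → Matrix (Fin n) (Fin n) ℝ) (l : ℕ) :
    ℕ → Matrix (Fin n) (Fin n) ℝ
  | 0 => 1
  | j + 1 => M (l + j + 1) * Mres M l j

section Aux

variable {n : ℕ}

private lemma kf_mulVec_dot (B : Matrix (Fin n) (Fin n) ℝ) (w x : Fin n → ℝ) :
    (B *ᵥ w) ⬝ᵥ x = w ⬝ᵥ (Bᵀ *ᵥ x) := by
  rw [dotProduct_mulVec, ← mulVec_transpose, transpose_transpose]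

private lemma kf_conj_quad (N A : Matrix (Fin n) (Fin n) ℝ) (h : Fin n → ℝ) :
    h ⬝ᵥ ((N * A * Nᵀ) *ᵥ h) = (Nᵀ *ᵥ h) ⬝ᵥ (A *ᵥ (Nᵀ *ᵥ h)) := by
  rw [← mulVec_mulVec, ← mulVec_mulVec, dotProduct_comm, kf_mulVec_dot, dotProduct_comm]

/-- Key one-step lemma: `(1 + PΩ)⁻¹ P` is positive semidefinite and its quadratic
form is dominated by that of `P`. -/
private lemma kf_step {P Ω : Matrix (Fin n) (Fin n) ℝ}
    (hP : P.PosSemidef) (hΩ : Ω.PosSemidef) :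
    ((1 + P * Ω)⁻¹ * P).PosSemidef ∧
      ∀ g : Fin n → ℝ, g ⬝ᵥ (((1 + P * Ω)⁻¹ * P) *ᵥ g) ≤ g ⬝ᵥ (P *ᵥ g) := by
  set S := (open scoped MatrixOrder in CFC.sqrt P) with hS
  have hSps : S.PosSemidef := open scoped MatrixOrder in (CFC.sqrt_nonneg P).posSemidef
  have hSS : S * S = P := open scoped MatrixOrder in CFC.sqrt_mul_sqrt_self P hP.nonneg
  have hSsymm : Sᵀ = S := by
    have := hSps.isHermitian
    rwa [IsHermitian, conjTranspose_eq_transpose_of_trivial] at this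
  set C := S * Ω * S with hC
  have hCps : C.PosSemidef := by
    have := hΩ.conjTranspose_mul_mul_same S
    rwa [conjTranspose_eq_transpose_of_trivial, hSsymm] at this
  set B := (1 : Matrix (Fin n) (Fin n) ℝ) + C with hB
  have hBpd : B.PosDef := Matrix.PosDef.one.add_posSemidef hCps
  have hBunit : IsUnit B.det := hBpd.isUnit.map (Matrix.detMonoidHom)
  have hABfact : (1 + P * Ω) * (S * B⁻¹ * S) = P := by
    have h1 : (1 + P * Ω) * S = S * B := by
      rw [hB, hC, ← hSS]; noncomm_ring
    calc (1 + P * Ω) * (S * B⁻¹ * S) = ((1 + P * Ω) * S) * (B⁻¹ * S) := by noncomm_ring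
    _ = S * (B * B⁻¹) * S := by rw [h1]; noncomm_ring
    _ = P := by rw [Matrix.mul_nonsing_inv _ hBunit, Matrix.mul_one, hSS]
  have hAdet : IsUnit (1 + P * Ω).det := by
    have : (1 + P * Ω).det = B.det := by
      rw [hB, hC]
      have : P * Ω = S * (S * Ω) := by rw [← hSS]; noncomm_ring
      rw [this, Matrix.det_one_add_mul_comm]
    rw [this]; exact hBunit
  have hQeq : (1 + P * Ω)⁻¹ * P = S * B⁻¹ * S := by
    nth_rewrite 2 [← hABfact]
    rw [← Matrix.mul_assoc, Matrix.nonsing_inv_mul _ hAdet, Matrix.one_mul]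
  have hQps : (S * B⁻¹ * S).PosSemidef := by
    have := hBpd.inv.posSemidef.conjTranspose_mul_mul_same S
    rwa [conjTranspose_eq_transpose_of_trivial, hSsymm] at this
  constructor
  · rw [hQeq]; exact hQps
  · intro g
    rw [hQeq]
    have hconj : g ⬝ᵥ ((S * B⁻¹ * S) *ᵥ g) = (S *ᵥ g) ⬝ᵥ (B⁻¹ *ᵥ (S *ᵥ g)) := by
      have := kf_conj_quad S B⁻¹ g
      rwa [hSsymm] at this
    have hRHS : g ⬝ᵥ (P *ᵥ g) = (S *ᵥ g) ⬝ᵥ (S *ᵥ g) := by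
      rw [kf_mulVec_dot, hSsymm, mulVec_mulVec, hSS]
    rw [hconj, hRHS]
    set u := S *ᵥ g
    set w := B⁻¹ *ᵥ u with hw
    have hu : B *ᵥ w = u := by
      rw [hw, mulVec_mulVec, Matrix.mul_nonsing_inv _ hBunit, one_mulVec]
    have hBsymm : Bᵀ = B := by
      have := hBpd.isHermitian
      rwa [IsHermitian, conjTranspose_eq_transpose_of_trivial] at this
    have hL : u ⬝ᵥ (B⁻¹ *ᵥ u) = w ⬝ᵥ (B *ᵥ w) := by
      rw [← hw, ← hu, kf_mulVec_dot, hBsymm, dotProduct_comm]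
    have hR : u ⬝ᵥ u = w ⬝ᵥ ((B * B) *ᵥ w) := by
      rw [← hu, kf_mulVec_dot, hBsymm, mulVec_mulVec]
    rw [hL, hR]
    have hdiff : (B * B) - B = C + Cᵀ * C := by
      rw [hB]; have : Cᵀ = C := by
        have := hCps.isHermitian
        rwa [IsHermitian, conjTranspose_eq_transpose_of_trivial] at this
      rw [this]; noncomm_ring
    have hdps : ((B * B) - B).PosSemidef := by
      rw [hdiff]
      have h2 : (Cᵀ * C).PosSemidef := by
        have := Matrix.posSemidef_conjTranspose_mul_self C
        rwa [conjTranspose_eq_transpose_of_trivial] at this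
      exact hCps.add h2
    have := hdps.dotProduct_mulVec_nonneg w
    rw [star_trivial] at this
    rw [sub_mulVec, dotProduct_sub] at this
    linarith

/-- Quadratic form of a positive semidefinite matrix is bounded by the largest
eigenvalue times the squared norm. -/
private lemma kf_quad_le_sup_eigen {A : Matrix (Fin n) (Fin n) ℝ}
    (hA : A.PosSemidef) (h : Fin n → ℝ) :
    h ⬝ᵥ (A *ᵥ h) ≤ (⨆ i, hA.isHermitian.eigenvalues i) * (h ⬝ᵥ h) := by
  set U : Matrix (Fin n) (Fin n) ℝ := (hA.isHermitian.eigenvectorUnitary : Matrix (Fin n) (Fin n) ℝ)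
    with hU
  have hspec := hA.isHermitian.spectral_theorem
  have hstar : star U = Uᵀ := by
    rw [star_eq_conjTranspose, conjTranspose_eq_transpose_of_trivial]
  have hUU : U * Uᵀ = 1 := by
    rw [← hstar]; exact (Matrix.mem_unitaryGroup_iff).mp hA.isHermitian.eigenvectorUnitary.2
  set y : Fin n → ℝ := Uᵀ *ᵥ h with hy
  have hspec' : A = U * diagonal hA.isHermitian.eigenvalues * Uᵀ := by
    rw [← hstar, hU]
    rw [Unitary.conjStarAlgAut_apply] at hspec
    exact hspec
  have hLHS : h ⬝ᵥ (A *ᵥ h) = ∑ i, hA.isHermitian.eigenvalues i * (y i)^2 := by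
    conv_lhs => rw [hspec', kf_conj_quad]
    rw [← hy]
    simp only [dotProduct, mulVec_diagonal, sq]
    exact Finset.sum_congr rfl fun i _ => by ring
  have hRHS : h ⬝ᵥ h = ∑ i, (y i)^2 := by
    have : y ⬝ᵥ y = h ⬝ᵥ h := by
      rw [hy, dotProduct_comm, kf_mulVec_dot, transpose_transpose, mulVec_mulVec, hUU, one_mulVec]
    rw [← this]; simp [dotProduct, sq]
  rw [hLHS, hRHS, Finset.mul_sum]
  apply Finset.sum_le_sum
  intro i _
  exact mul_le_mul_of_nonneg_right
    (le_ciSup (Set.Finite.bddAbove (Set.finite_range _)) i) (sq_nonneg _)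

end Aux

/-- Quantitative weak-collapse bound for the perfect-model Kalman filter:
for every `k` and every vector `h`, `hᵀ P_k h ≤ σ₁⁰ * ‖M_{k:0}ᵀ h‖²`, where
`σ₁⁰` is the largest eigenvalue of `P_0` and the Euclidean norm squared of a
vector `v` is written as `v ⬝ᵥ v`. -/
theorem kf_weak_collapse_bound {n : ℕ}
    (M Ω : ℕ → Matrix (Fin n) (Fin n) ℝ)
    (hM : ∀ k, 1 ≤ k → IsUnit (M k)) (hΩ : ∀ k, (Ω k).PosSemidef)
    (P : ℕ → Matrix (Fin n) (Fin n) ℝ) (hP0 : (P 0).PosSemidef)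
    (hrec : ∀ k, P (k + 1)
      = M (k + 1) * (1 + P k * Ω k)⁻¹ * P k * (M (k + 1))ᵀ) :
    ∀ k, ∀ h : Fin n → ℝ,
      h ⬝ᵥ ((P k) *ᵥ h)
        ≤ (⨆ i, hP0.isHermitian.eigenvalues i)
          * (((Mres M 0 k)ᵀ *ᵥ h) ⬝ᵥ ((Mres M 0 k)ᵀ *ᵥ h)) := by
  have key : ∀ k, (P k).PosSemidef ∧
      ∀ h : Fin n → ℝ, h ⬝ᵥ ((P k) *ᵥ h)
        ≤ (⨆ i, hP0.isHermitian.eigenvalues i)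
          * (((Mres M 0 k)ᵀ *ᵥ h) ⬝ᵥ ((Mres M 0 k)ᵀ *ᵥ h)) := by
    intro k
    induction k with
    | zero =>
      refine ⟨hP0, fun h => ?_⟩
      have := kf_quad_le_sup_eigen hP0 h
      simpa [Mres] using this
    | succ k ih =>
      obtain ⟨hPk, hbound⟩ := ih
      obtain ⟨hQps, hQle⟩ := kf_step hPk (hΩ k)
      have hPk1 : P (k + 1) = M (k + 1) * ((1 + P k * Ω k)⁻¹ * P k) * (M (k + 1))ᵀ := by
        rw [hrec k, Matrix.mul_assoc, ← Matrix.mul_assoc, ← Matrix.mul_assoc]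
      constructor
      · rw [hPk1]
        have := hQps.mul_mul_conjTranspose_same (M (k + 1))
        rwa [conjTranspose_eq_transpose_of_trivial] at this
      · intro h
        set g : Fin n → ℝ := (M (k + 1))ᵀ *ᵥ h with hg
        have h1 : h ⬝ᵥ ((P (k + 1)) *ᵥ h) = g ⬝ᵥ (((1 + P k * Ω k)⁻¹ * P k) *ᵥ g) := by
          rw [hPk1, kf_conj_quad, hg]
        have h2 : (Mres M 0 (k + 1))ᵀ *ᵥ h = (Mres M 0 k)ᵀ *ᵥ g := by
          show (M (0 + k + 1) * Mres M 0 k)ᵀ *ᵥ h = _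
          rw [transpose_mul, ← mulVec_mulVec, hg, Nat.zero_add]
        calc h ⬝ᵥ ((P (k + 1)) *ᵥ h) = g ⬝ᵥ (((1 + P k * Ω k)⁻¹ * P k) *ᵥ g) := h1
        _ ≤ g ⬝ᵥ ((P k) *ᵥ g) := hQle g
        _ ≤ (⨆ i, hP0.isHermitian.eigenvalues i)
            * (((Mres M 0 k)ᵀ *ᵥ g) ⬝ᵥ ((Mres M 0 k)ᵀ *ᵥ g)) := hbound g
        _ = (⨆ i, hP0.isHermitian.eigenvalues i)
            * (((Mres M 0 (k+1))ᵀ *ᵥ h) ⬝ᵥ ((Mres M 0 (k+1))ᵀ *ᵥ h)) := by rw [h2]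
  exact fun k => (key k).2
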